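/- For the 5-by-5 matrix A = [[0,0,1,0,0],[0,0,0,b,tc],[0,0,0,c,−tb],[0,0,0,0,s],[0,0,0,0,0]] with b,c,s,t ≥ 0, s²+t²=1, b²+c²=1, the eigenvalues of the upper-left 4-by-4 principal submatrix of Re(e^{−iθ}A) are (1/2)√(1+c), −(1/2)√(1+c), (1/2)√(1−c), −(1/2)√(1−c), independently of θ. -/
import Mathlib


open Matrix

open Polynomial in
private lemma aux_charpoly_5x5 (z w : ℂ) (hzw : z * w = 1) (b c : ℝ)
    (hbc : (b:ℂ)^2 + (c:ℂ)^2 = 1) :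
    (!![0, 0, z/2, 0;
        0, 0, 0, z*b/2;
        w/2, 0, 0, z*c/2;
        0, w*b/2, w*c/2, 0] : Matrix (Fin 4) (Fin 4) ℂ).charpoly
      = (X ^ 2 - C (((1 + c) / 4 : ℝ) : ℂ)) * (X ^ 2 - C (((1 - c) / 4 : ℝ) : ℂ)) := by
  apply Polynomial.funext
  intro x
  rw [Matrix.charpoly, ← Polynomial.coe_evalRingHom, RingHom.map_det]
  simp (config := { decide := true }) [Matrix.det_succ_row_zero, Fin.sum_univ_succ,
    charmatrix_apply, Fin.succAbove, Matrix.submatrix_apply, Matrix.diagonal_apply]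
  ring_nf
  linear_combination (-(x^2)/2 - ((b:ℂ)^2+(c:ℂ)^2-1)*x^2/4 + (1+z*w)*(b:ℂ)^2/16) * hzw +
    (-(x^2)/4 + 1/16) * hbc

open Polynomial in
theorem submatrix_eigenvalues_5x5 (b c s t θ : ℝ)
    (hb : 0 ≤ b) (hc : 0 ≤ c) (hs : 0 ≤ s) (ht : 0 ≤ t)
    (hst : s ^ 2 + t ^ 2 = 1) (hbc : b ^ 2 + c ^ 2 = 1) :
    let A : Matrix (Fin 5) (Fin 5) ℂ :=
      !![0, 0, 1, 0, 0;
         0, 0, 0, (b : ℂ), ((t * c : ℝ) : ℂ);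
         0, 0, 0, (c : ℂ), ((-(t * b) : ℝ) : ℂ);
         0, 0, 0, 0, (s : ℂ);
         0, 0, 0, 0, 0]
    let M : Matrix (Fin 5) (Fin 5) ℂ :=
      (1 / 2 : ℂ) • (Complex.exp (-(θ : ℂ) * Complex.I) • A +
        (Complex.exp (-(θ : ℂ) * Complex.I) • A)ᴴ)
    (M.submatrix (fun i : Fin 4 => i.castSucc) (fun i : Fin 4 => i.castSucc)).charpoly =
      (X ^ 2 - C (((1 + c) / 4 : ℝ) : ℂ)) * (X ^ 2 - C (((1 - c) / 4 : ℝ) : ℂ)) := by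
  intro A M
  set z : ℂ := Complex.exp (-(θ : ℂ) * Complex.I) with hz
  set w : ℂ := Complex.exp ((θ : ℂ) * Complex.I) with hw
  have hconj : (starRingEnd ℂ) (Complex.exp (-((θ : ℂ) * Complex.I))) = w := by
    rw [hw, ← Complex.exp_conj]; congr 1; simp [Complex.conj_I]; try ring
  have hsub : M.submatrix (fun i : Fin 4 => i.castSucc) (fun i : Fin 4 => i.castSucc) =
      !![0, 0, z/2, 0;
         0, 0, 0, z*b/2;
         w/2, 0, 0, z*c/2;
         0, w*b/2, w*c/2, 0] := by
    have e0 : ((0:Fin 4).castSucc) = (0:Fin 5) := rfl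
    have e1 : ((1:Fin 4).castSucc) = (1:Fin 5) := rfl
    have e2 : ((2:Fin 4).castSucc) = (2:Fin 5) := rfl
    have e3 : ((3:Fin 4).castSucc) = (3:Fin 5) := rfl
    ext i j
    fin_cases i <;> fin_cases j <;>
      simp [M, A, hz, Matrix.conjTranspose_apply, e0, e1, e2, e3, hconj,
        Complex.conj_ofReal, Matrix.vecHead, Matrix.vecTail] <;> try ring
  rw [hsub]
  apply aux_charpoly_5x5
  · rw [hz, hw, ← Complex.exp_add]; simp
  · norm_cast
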